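/- Let n ≥ 1, let m ≥ n−1, and let G_1, …, G_m be communication graphs on n nodes such that at least n−1 of them are rooted. Then the product G_1 ∘ G_2 ∘ ⋯ ∘ G_m is nonsplit. -/

import Mathlib

/-- A communication graph is nonsplit if any two nodes have a common incoming neighbor. -/
def Nonsplit {n : ℕ} (E : Fin n → Fin n → Prop) : Prop :=
  ∀ p q, ∃ r, E r p ∧ E r q

/-- A communication graph is rooted if there is a node `r` from which every node is
reachable by a directed path. -/
def Rooted {n : ℕ} (E : Fin n → Fin n → Prop) : Prop :=
  ∃ r, ∀ p, Relation.ReflTransGen E r p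

/-- `GraphProd G m` is the product `G 1 ∘ G 2 ∘ ⋯ ∘ G m` of communication graphs, where
the product `G ∘ H` has an edge `(p,q)` iff there is `r` with edges `(p,r) ∈ G` and
`(r,q) ∈ H`; the empty product is the identity graph. -/
def GraphProd {n : ℕ} (G : ℕ → Fin n → Fin n → Prop) : ℕ → Fin n → Fin n → Prop
  | 0 => fun p q => p = q
  | m + 1 => fun p q => ∃ r, GraphProd G m p r ∧ G (m + 1) r q

open Finset
open scoped Classical

noncomputable def stepSet {n : ℕ} (G : ℕ → Fin n → Fin n → Prop) (k : ℕ)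
    (S : Finset (Fin n)) : Finset (Fin n) :=
  Finset.univ.filter (fun x => ∃ y ∈ S, G k x y)

noncomputable def Back {n : ℕ} (G : ℕ → Fin n → Fin n → Prop) :
    ℕ → Finset (Fin n) → Finset (Fin n)
  | 0, S => S
  | m + 1, S => Back G m (stepSet G (m + 1) S)

lemma graphProd_refl {n : ℕ} (G : ℕ → Fin n → Fin n → Prop) (m : ℕ)
    (hrefl : ∀ k, 1 ≤ k → k ≤ m → ∀ p, G k p p) (p : Fin n) :
    GraphProd G m p p := by
  induction m with
  | zero => rfl
  | succ m ih =>
    exact ⟨p, ih (fun k h1 h2 => hrefl k h1 (h2.trans (Nat.le_succ m))),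
      hrefl (m + 1) (Nat.succ_le_succ (Nat.zero_le m)) le_rfl p⟩

lemma mem_Back {n : ℕ} (G : ℕ → Fin n → Fin n → Prop) :
    ∀ (m : ℕ) (S : Finset (Fin n)) (x : Fin n),
      x ∈ Back G m S ↔ ∃ p ∈ S, GraphProd G m x p := by
  intro m
  induction m with
  | zero =>
    intro S x
    simp only [Back, GraphProd]
    constructor
    · intro h; exact ⟨x, h, rfl⟩
    · rintro ⟨p, hp, rfl⟩; exact hp
  | succ m ih =>
    intro S x
    show x ∈ Back G m (stepSet G (m + 1) S) ↔ _
    rw [ih]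
    simp only [stepSet, Finset.mem_filter, Finset.mem_univ, true_and, GraphProd]
    constructor
    · rintro ⟨r, ⟨p, hp, hrp⟩, hxr⟩
      exact ⟨p, hp, r, hxr, hrp⟩
    · rintro ⟨p, hp, r, hxr, hrp⟩
      exact ⟨r, ⟨p, hp, hrp⟩, hxr⟩

lemma root_mem_of_closed {n : ℕ} {E : Fin n → Fin n → Prop} {S : Finset (Fin n)}
    (hclosed : ∀ x y, E x y → y ∈ S → x ∈ S) {r s : Fin n} (hs : s ∈ S)
    (h : Relation.ReflTransGen E r s) : r ∈ S := by
  induction h using Relation.ReflTransGen.head_induction_on with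
  | refl => exact hs
  | head hab _ ih => exact hclosed _ _ hab ih

lemma key {n : ℕ} (G : ℕ → Fin n → Fin n → Prop) :
    ∀ (m : ℕ) (S T : Finset (Fin n)) (R : Finset ℕ),
      R ⊆ Finset.Icc 1 m → (∀ k ∈ R, Rooted (G k)) →
      (∀ k, 1 ≤ k → k ≤ m → ∀ p, G k p p) →
      S.Nonempty → T.Nonempty →
      (Back G m S ∩ Back G m T).Nonempty ∨
        (S ∪ T).card + R.card ≤ (Back G m S ∪ Back G m T).card := by
  intro m
  induction m with
  | zero =>
    intro S T R hR _ _ _ _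
    right
    have : R = ∅ := by
      rw [Finset.eq_empty_iff_forall_notMem]
      intro k hk
      have := hR hk
      simp at this
    simp [this, Back]
  | succ m ih =>
    intro S T R hR hrooted hrefl hS hT
    set S' := stepSet G (m + 1) S with hS'def
    set T' := stepSet G (m + 1) T with hT'def
    have hSS' : S ⊆ S' := by
      intro x hx
      simp only [hS'def, stepSet, Finset.mem_filter, Finset.mem_univ, true_and]
      exact ⟨x, hx, hrefl (m + 1) (by omega) le_rfl x⟩
    have hTT' : T ⊆ T' := by
      intro x hx
      simp only [hT'def, stepSet, Finset.mem_filter, Finset.mem_univ, true_and]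
      exact ⟨x, hx, hrefl (m + 1) (by omega) le_rfl x⟩
    have hreflm : ∀ k, 1 ≤ k → k ≤ m → ∀ p, G k p p :=
      fun k h1 h2 => hrefl k h1 (h2.trans (Nat.le_succ m))
    set R' := R.erase (m + 1) with hR'def
    have hR' : R' ⊆ Finset.Icc 1 m := by
      intro k hk
      have h1 : k ∈ R := Finset.mem_of_mem_erase hk
      have h2 : k ≠ m + 1 := Finset.ne_of_mem_erase hk
      have := hR h1
      simp only [Finset.mem_Icc] at this ⊢
      omega
    have hBS : Back G (m + 1) S = Back G m S' := rfl
    have hBT : Back G (m + 1) T = Back G m T' := rfl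
    rcases ih S' T' R' hR' (fun k hk => hrooted k (Finset.mem_of_mem_erase hk))
        hreflm (hS.mono hSS') (hT.mono hTT') with h | hcard
    · left; rw [hBS, hBT]; exact h
    · by_cases hmem : (m + 1) ∈ R
      · by_cases hint : (S' ∩ T').Nonempty
        · left
          obtain ⟨x, hx⟩ := hint
          rw [Finset.mem_inter] at hx
          refine ⟨x, Finset.mem_inter.2 ⟨?_, ?_⟩⟩
          · rw [hBS, mem_Back]; exact ⟨x, hx.1, graphProd_refl G m hreflm x⟩
          · rw [hBT, mem_Back]; exact ⟨x, hx.2, graphProd_refl G m hreflm x⟩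
        · right
          -- S' and T' disjoint, hence S, T disjoint
          have hdisj' : Disjoint S' T' :=
            Finset.disjoint_iff_inter_eq_empty.2
              (Finset.not_nonempty_iff_eq_empty.1 hint)
          have hdisj : Disjoint S T :=
            hdisj'.mono hSS' hTT'
          have hgrow : (S ∪ T).card + 1 ≤ (S' ∪ T').card := by
            rw [Finset.card_union_of_disjoint hdisj, Finset.card_union_of_disjoint hdisj']
            have hcS : S.card ≤ S'.card := Finset.card_le_card hSS'
            have hcT : T.card ≤ T'.card := Finset.card_le_card hTT'
            by_contra hcon
            push_neg at hcon
            have hSeq : S' = S := (Finset.eq_of_subset_of_card_le hSS' (by omega)).symm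
            have hTeq : T' = T := (Finset.eq_of_subset_of_card_le hTT' (by omega)).symm
            obtain ⟨r, hr⟩ := hrooted (m + 1) hmem
            have hclS : ∀ x y, G (m + 1) x y → y ∈ S → x ∈ S := by
              intro x y hxy hy
              rw [← hSeq]
              simp only [hS'def, stepSet, Finset.mem_filter, Finset.mem_univ, true_and]
              exact ⟨y, hy, hxy⟩
            have hclT : ∀ x y, G (m + 1) x y → y ∈ T → x ∈ T := by
              intro x y hxy hy
              rw [← hTeq]
              simp only [hT'def, stepSet, Finset.mem_filter, Finset.mem_univ, true_and]
              exact ⟨y, hy, hxy⟩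
            obtain ⟨s, hs⟩ := hS
            obtain ⟨t, ht⟩ := hT
            have hrS : r ∈ S := root_mem_of_closed hclS hs (hr s)
            have hrT : r ∈ T := root_mem_of_closed hclT ht (hr t)
            exact (Finset.disjoint_left.1 hdisj hrS) hrT
          have hRcard : R'.card + 1 = R.card := by
            rw [hR'def, Finset.card_erase_of_mem hmem]
            have : 1 ≤ R.card := Finset.card_pos.2 ⟨m + 1, hmem⟩
            omega
          rw [hBS, hBT]
          omega
      · right
        have hReq : R' = R := Finset.erase_eq_of_notMem hmem
        have hsub : (S ∪ T).card ≤ (S' ∪ T').card :=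
          Finset.card_le_card (Finset.union_subset_union hSS' hTT')
        rw [hBS, hBT]
        rw [hReq] at hcard
        omega

theorem product_with_enough_rooted_is_nonsplit
    (n m : ℕ) (hn : 1 ≤ n) (hm : n - 1 ≤ m)
    (G : ℕ → Fin n → Fin n → Prop)
    (hrefl : ∀ k, 1 ≤ k → k ≤ m → ∀ p, G k p p)
    (hrooted : ∃ S : Finset ℕ, S ⊆ Finset.Icc 1 m ∧ n - 1 ≤ S.card ∧
      ∀ k ∈ S, Rooted (G k)) :
    Nonsplit (GraphProd G m) := by
  intro p q
  by_cases hpq : p = q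
  · subst hpq
    exact ⟨p, graphProd_refl G m hrefl p, graphProd_refl G m hrefl p⟩
  · obtain ⟨R, hR1, hR2, hR3⟩ := hrooted
    rcases key G m {p} {q} R hR1 hR3 hrefl ⟨p, Finset.mem_singleton_self p⟩
        ⟨q, Finset.mem_singleton_self q⟩ with h | h
    · obtain ⟨r, hr⟩ := h
      rw [Finset.mem_inter, mem_Back, mem_Back] at hr
      obtain ⟨⟨p', hp', hgp⟩, ⟨q', hq', hgq⟩⟩ := hr
      rw [Finset.mem_singleton] at hp' hq'
      subst hp'; subst hq'
      exact ⟨r, hgp, hgq⟩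
    · exfalso
      have h2 : ({p} ∪ {q} : Finset (Fin n)).card = 2 := by
        rw [Finset.card_union_of_disjoint (by simp [Ne.symm hpq, hpq])]
        simp
      have hle : (Back G m {p} ∪ Back G m {q}).card ≤ n := by
        have := Finset.card_le_univ (Back G m {p} ∪ Back G m {q})
        simpa using this
      omega
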